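/- For every θ ∈ ℂ⁴, the involutions σ₁, σ₂, σ₃ restricted to S(θ) satisfy no relations other than the trivial ones σ₁² = σ₂² = σ₃² = 1; that is, the group homomorphism from the free product (ℤ/2ℤ) * (ℤ/2ℤ) * (ℤ/2ℤ) to the group of bijections of S(θ) that sends the i-th free-product generator to σᵢ|_{S(θ)} is injective. Equivalently, for every nonempty word σ_{i₁}σ_{i₂}⋯σ_{iₙ} with all consecutive indices i_ν ≠ i_{ν+1}, the corresponding composite is not the identity map of S(θ). -/

import Mathlib

noncomputable section

/-- The defining cubic polynomial `f(x,θ)` of the character variety. -/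
def pvF (θ : ℂ × ℂ × ℂ × ℂ) (x : ℂ × ℂ × ℂ) : ℂ :=
  x.1 * x.2.1 * x.2.2 + x.1 ^ 2 + x.2.1 ^ 2 + x.2.2 ^ 2
    - θ.1 * x.1 - θ.2.1 * x.2.1 - θ.2.2.1 * x.2.2 + θ.2.2.2

/-- The affine cubic surface `S(θ)`. -/
def pvS (θ : ℂ × ℂ × ℂ × ℂ) : Set (ℂ × ℂ × ℂ) := {x | pvF θ x = 0}

/-- The three involutions `σ₁, σ₂, σ₃` (indexed by `Fin 3`). -/
def sig (θ : ℂ × ℂ × ℂ × ℂ) : Fin 3 → (ℂ × ℂ × ℂ) → (ℂ × ℂ × ℂ) :=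
  ![fun x => (θ.1 - x.2.1 * x.2.2 - x.1, x.2.1, x.2.2),
    fun x => (x.1, θ.2.1 - x.1 * x.2.2 - x.2.1, x.2.2),
    fun x => (x.1, x.2.1, θ.2.2.1 - x.1 * x.2.1 - x.2.2)]

/-- The composite map `σ_{i₁} ∘ σ_{i₂} ∘ ⋯ ∘ σ_{iₙ}` corresponding to the
word given by the list `l = [i₁, i₂, …, iₙ]`. -/
def applyWord (θ : ℂ × ℂ × ℂ × ℂ) (l : List (Fin 3)) (x : ℂ × ℂ × ℂ) : ℂ × ℂ × ℂ :=
  l.foldr (fun i y => sig θ i y) x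

/-- Coordinates of a point of `ℂ³`. -/
def coordC : Fin 3 → (ℂ × ℂ × ℂ) → ℂ :=
  ![fun x => x.1, fun x => x.2.1, fun x => x.2.2]

/-- A bound for the norms of the first three parameters. -/
def Cbig (θ : ℂ × ℂ × ℂ × ℂ) : ℝ := max ‖θ.1‖ (max ‖θ.2.1‖ ‖θ.2.2.1‖)

lemma Cbig_nonneg (θ : ℂ × ℂ × ℂ × ℂ) : 0 ≤ Cbig θ :=
  le_trans (norm_nonneg _) (le_max_left _ _)

/-- Ping-pong region: the `m`-th coordinate dominates, the others are large. -/
def Pset (θ : ℂ × ℂ × ℂ × ℂ) (m : Fin 3) (x : ℂ × ℂ × ℂ) : Prop :=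
  ∀ n, n ≠ m → (3 + Cbig θ ≤ ‖coordC n x‖ ∧ 2 * ‖coordC n x‖ < ‖coordC m x‖)

lemma normlb (t u w : ℂ) : ‖u‖ - ‖t‖ - ‖w‖ ≤ ‖t - u - w‖ := by
  have h1 : t - u - w = -(u - (t - w)) := by ring
  rw [h1, norm_neg]
  have h2 := norm_sub_norm_le u (t - w)
  have h3 := norm_sub_le t w
  linarith

lemma estim {C u v w z : ℝ} (hC : 0 ≤ C) (hu : 2*(3+C) < u) (hv : 3 + C ≤ v)
    (hw : 2*w < u) (hw0 : 0 ≤ w) (hv2 : 2*v < u) (hz : u*v - C - w ≤ z) :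
    2*u < z ∧ 2*v < z := by
  constructor <;> nlinarith

lemma key {t u v w : ℂ} {C : ℝ} (hC : 0 ≤ C) (ht : ‖t‖ ≤ C)
    (hu : 2*(3+C) < ‖u‖) (hv : 3+C ≤ ‖v‖)
    (hw : 2*‖w‖ < ‖u‖) (hv2 : 2*‖v‖ < ‖u‖) :
    2*‖u‖ < ‖t - u*v - w‖
      ∧ 2*‖v‖ < ‖t - u*v - w‖ := by
  have h1 := normlb t (u*v) w
  rw [norm_mul] at h1
  exact estim hC hu hv hw (norm_nonneg w) hv2 (by linarith)

lemma step (θ : ℂ × ℂ × ℂ × ℂ) {j m : Fin 3} (hjm : j ≠ m) {x : ℂ × ℂ × ℂ}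
    (hx : Pset θ m x) :
    Pset θ j (sig θ j x) ∧ ‖coordC m x‖ < ‖coordC j (sig θ j x)‖ := by
  have hC := Cbig_nonneg θ
  have ht1 : ‖θ.1‖ ≤ Cbig θ := le_max_left _ _
  have ht2 : ‖θ.2.1‖ ≤ Cbig θ := le_trans (le_max_left _ _) (le_max_right _ _)
  have ht3 : ‖θ.2.2.1‖ ≤ Cbig θ := le_trans (le_max_right _ _) (le_max_right _ _)
  fin_cases j <;> fin_cases m <;> first | exact absurd rfl hjm | skip
  · -- j = 0, m = 1
    have hA := hx 0 (by decide)
    have hB := hx 2 (by decide)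
    simp [Pset, coordC, sig, Fin.forall_fin_succ] at hA hB ⊢
    have hu : 2*(3+Cbig θ) < ‖x.2.1‖ := by linarith [hA.1, hA.2]
    have K := key hC ht1 hu hB.1 hA.2 hB.2
    exact ⟨⟨⟨by linarith, K.1⟩, hB.1, K.2⟩, by linarith [K.1, norm_nonneg x.2.1]⟩
  · -- j = 0, m = 2
    have hA := hx 0 (by decide)
    have hB := hx 1 (by decide)
    simp [Pset, coordC, sig, Fin.forall_fin_succ] at hA hB ⊢
    rw [mul_comm x.2.1 x.2.2]
    have hu : 2*(3+Cbig θ) < ‖x.2.2‖ := by linarith [hA.1, hA.2]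
    have K := key hC ht1 hu hB.1 hA.2 hB.2
    exact ⟨⟨⟨hB.1, K.2⟩, by linarith, K.1⟩, by linarith [K.1, norm_nonneg x.2.2]⟩
  · -- j = 1, m = 0
    have hA := hx 1 (by decide)
    have hB := hx 2 (by decide)
    simp [Pset, coordC, sig, Fin.forall_fin_succ] at hA hB ⊢
    have hu : 2*(3+Cbig θ) < ‖x.1‖ := by linarith [hA.1, hA.2]
    have K := key hC ht2 hu hB.1 hA.2 hB.2
    exact ⟨⟨⟨by linarith, K.1⟩, hB.1, K.2⟩, by linarith [K.1, norm_nonneg x.1]⟩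
  · -- j = 1, m = 2
    have hA := hx 0 (by decide)
    have hB := hx 1 (by decide)
    simp [Pset, coordC, sig, Fin.forall_fin_succ] at hA hB ⊢
    rw [mul_comm x.1 x.2.2]
    have hu : 2*(3+Cbig θ) < ‖x.2.2‖ := by linarith [hA.1, hA.2]
    have K := key hC ht2 hu hA.1 hB.2 hA.2
    exact ⟨⟨⟨hA.1, K.2⟩, by linarith, K.1⟩, by linarith [K.1, norm_nonneg x.2.2]⟩
  · -- j = 2, m = 0
    have hA := hx 1 (by decide)
    have hB := hx 2 (by decide)
    simp [Pset, coordC, sig, Fin.forall_fin_succ] at hA hB ⊢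
    have hu : 2*(3+Cbig θ) < ‖x.1‖ := by linarith [hA.1, hA.2]
    have K := key hC ht3 hu hA.1 hB.2 hA.2
    exact ⟨⟨⟨by linarith, K.1⟩, hA.1, K.2⟩, by linarith [K.1, norm_nonneg x.1]⟩
  · -- j = 2, m = 1
    have hA := hx 0 (by decide)
    have hB := hx 2 (by decide)
    simp [Pset, coordC, sig, Fin.forall_fin_succ] at hA hB ⊢
    rw [mul_comm x.1 x.2.1]
    have hu : 2*(3+Cbig θ) < ‖x.2.1‖ := by linarith [hA.1, hA.2]
    have K := key hC ht3 hu hA.1 hB.2 hA.2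
    exact ⟨⟨⟨hA.1, K.2⟩, by linarith, K.1⟩, by linarith [K.1, norm_nonneg x.2.1]⟩

lemma word (θ : ℂ × ℂ × ℂ × ℂ) :
    ∀ (l : List (Fin 3)) (hl : l ≠ []), l.Chain' (· ≠ ·) → ∀ (m : Fin 3) (x : ℂ × ℂ × ℂ),
      Pset θ m x → l.getLast hl ≠ m →
      Pset θ (l.head hl) (applyWord θ l x) ∧
        ‖coordC m x‖ < ‖coordC (l.head hl) (applyWord θ l x)‖ := by
  intro l
  induction l with
  | nil => intro hl; exact absurd rfl hl
  | cons i t ih =>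
    intro hl hch m x hm hlast
    cases t with
    | nil =>
      have : i ≠ m := by simpa using hlast
      exact step θ this hm
    | cons j t' =>
      have hij : i ≠ j := (List.isChain_cons_cons.mp hch).1
      have hch' : (j :: t').Chain' (· ≠ ·) := (List.isChain_cons_cons.mp hch).2
      have hlast' : (j :: t').getLast (by simp) ≠ m := by
        rwa [List.getLast_cons (by simp)] at hlast
      obtain ⟨hP, hlt⟩ := ih (by simp) hch' m x hm hlast'
      have hhead : (j :: t').head (by simp) = j := rfl
      rw [hhead] at hP hlt
      have hstep := step θ hij hP
      exact ⟨hstep.1, lt_trans hlt hstep.2⟩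

lemma quad (b c : ℂ) :
    ∃ a : ℂ, a^2 + b*a + c = 0 ∧ ‖b‖ / 2 ≤ ‖a‖ := by
  obtain ⟨w, hw⟩ := IsAlgClosed.exists_pow_nat_eq (b^2 - 4*c) (n := 2) (by norm_num)
  have hsum : ‖b‖ ≤ ‖(-b+w)/2‖ + ‖(-b-w)/2‖ := by
    have h1 : ‖b‖ = ‖(-b+w)/2 + (-b-w)/2‖ := by
      rw [show (-b+w)/2 + (-b-w)/2 = -b by ring, norm_neg]
    rw [h1]; exact norm_add_le _ _
  rcases le_total (‖(-b+w)/2‖) (‖(-b-w)/2‖) with h | h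
  · exact ⟨(-b-w)/2, by linear_combination hw/4, by linarith⟩
  · exact ⟨(-b+w)/2, by linear_combination hw/4, by linarith⟩

lemma exists_point (θ : ℂ × ℂ × ℂ × ℂ) (m : Fin 3) :
    ∃ x, x ∈ pvS θ ∧ Pset θ m x := by
  have hC := Cbig_nonneg θ
  have ht1 : ‖θ.1‖ ≤ Cbig θ := le_max_left _ _
  have ht2 : ‖θ.2.1‖ ≤ Cbig θ := le_trans (le_max_left _ _) (le_max_right _ _)
  have ht3 : ‖θ.2.2.1‖ ≤ Cbig θ := le_trans (le_max_right _ _) (le_max_right _ _)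
  set s : ℝ := Cbig θ + 5 with hs
  have hs0 : (0:ℝ) < s := by simp only [hs]; linarith
  have hsabs : ‖(s:ℂ)‖ = s := by
    rw [Complex.norm_real, Real.norm_eq_abs, abs_of_pos hs0]
  have habs : ∀ t : ℂ, ‖t‖ ≤ Cbig θ →
      s*s - Cbig θ ≤ ‖(s:ℂ)*(s:ℂ) - t‖ := by
    intro t ht
    have h1 := norm_sub_norm_le ((s:ℂ)*(s:ℂ)) t
    rw [norm_mul] at h1
    simp only [hsabs] at h1 ⊢
    linarith
  fin_cases m
  · obtain ⟨a, ha, hab⟩ :=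
      quad ((s:ℂ)*(s:ℂ) - θ.1) (2*(s:ℂ)^2 - θ.2.1*(s:ℂ) - θ.2.2.1*(s:ℂ) + θ.2.2.2)
    have ha2 : 2*s < ‖a‖ := by
      have := habs θ.1 ht1
      have h2 : s*s - Cbig θ ≤ ‖(s:ℂ)*(s:ℂ) - θ.1‖ := this
      nlinarith [hab]
    refine ⟨(a, (s:ℂ), (s:ℂ)), ?_, ?_⟩
    · show pvF θ _ = 0
      simp only [pvF]
      linear_combination ha
    · simp [Pset, coordC, Fin.forall_fin_succ, hsabs, abs_of_pos hs0]
      exact ⟨by linarith, ha2⟩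
  · obtain ⟨a, ha, hab⟩ :=
      quad ((s:ℂ)*(s:ℂ) - θ.2.1) (2*(s:ℂ)^2 - θ.1*(s:ℂ) - θ.2.2.1*(s:ℂ) + θ.2.2.2)
    have ha2 : 2*s < ‖a‖ := by
      have h2 := habs θ.2.1 ht2
      nlinarith [hab]
    refine ⟨((s:ℂ), a, (s:ℂ)), ?_, ?_⟩
    · show pvF θ _ = 0
      simp only [pvF]
      linear_combination ha
    · simp [Pset, coordC, Fin.forall_fin_succ, hsabs, abs_of_pos hs0]
      exact ⟨by linarith, ha2⟩
  · obtain ⟨a, ha, hab⟩ :=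
      quad ((s:ℂ)*(s:ℂ) - θ.2.2.1) (2*(s:ℂ)^2 - θ.1*(s:ℂ) - θ.2.1*(s:ℂ) + θ.2.2.2)
    have ha2 : 2*s < ‖a‖ := by
      have h2 := habs θ.2.2.1 ht3
      nlinarith [hab]
    refine ⟨((s:ℂ), (s:ℂ), a), ?_, ?_⟩
    · show pvF θ _ = 0
      simp only [pvF]
      linear_combination ha
    · simp [Pset, coordC, Fin.forall_fin_succ, hsabs, abs_of_pos hs0]
      exact ⟨by linarith, ha2⟩

theorem no_nontrivial_relations (θ : ℂ × ℂ × ℂ × ℂ) (l : List (Fin 3))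
    (hne : l ≠ []) (hred : l.Chain' (· ≠ ·)) :
    ¬ (∀ x ∈ pvS θ, applyWord θ l x = x) := by
  intro hrel
  set m : Fin 3 := if l.getLast hne = 0 then 1 else 0 with hm0
  have hm : l.getLast hne ≠ m := by
    by_cases h : l.getLast hne = 0 <;> simp [hm0, h]
  obtain ⟨x, hxS, hxP⟩ := exists_point θ m
  obtain ⟨hP, hlt⟩ := word θ l hne hred m x hxP hm
  have heq := hrel x hxS
  rw [heq] at hlt
  rcases eq_or_ne (l.head hne) m with h1 | h1
  · rw [h1] at hlt; exact lt_irrefl _ hlt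
  · have h3 := (hxP _ h1).2
    have := norm_nonneg (coordC (l.head hne) x)
    linarith
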